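/- arXiv:1407.0331 — 5 statements merged into one kernel-verified Lean document; each statement's English description precedes it below -/
import Mathlib

section
/- If A = (a_ij) is a 3×3 positive semi-definite complex matrix, then the matrix (|a_ij|) obtained by taking the absolute value (modulus) of each entry is also positive semi-definite. -/
open ComplexOrder

theorem abs_entrywise_posSemidef_three (A : Matrix (Fin 3) (Fin 3) ℂ)
    (hA : A.PosSemidef) :
    (Matrix.of fun i j => (‖A i j‖ : ℝ)).PosSemidef := by
  obtain ⟨hH, hq⟩ := Matrix.posSemidef_iff_dotProduct_mulVec.mp hA
  have herm : ∀ i j, A j i = (starRingEnd ℂ) (A i j) := by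
    intro i j
    conv_lhs => rw [← hH]
    simp [Matrix.conjTranspose_apply]
  refine Matrix.posSemidef_iff_dotProduct_mulVec.mpr ⟨?_, ?_⟩
  · ext i j
    simp only [Matrix.conjTranspose_apply, Matrix.of_apply, star_trivial]
    rw [herm j i, Complex.norm_conj]
  · intro x
    -- choose k such that the two coordinates other than k have nonnegative product
    obtain ⟨k, hk⟩ : ∃ k : Fin 3, ∀ i j : Fin 3, i ≠ k → j ≠ k → 0 ≤ x i * x j := by
      have tri : ∀ i : Fin 3, i = 0 ∨ i = 1 ∨ i = 2 := by decide
      rcases le_or_gt 0 (x 0 * x 1) with h01 | h01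
      · refine ⟨2, fun i j hi hj => ?_⟩
        rcases tri i with rfl | rfl | rfl <;> rcases tri j with rfl | rfl | rfl <;>
          first
            | exact absurd rfl hi
            | exact absurd rfl hj
            | exact mul_self_nonneg _
            | exact h01
            | exact (mul_comm (x 0) (x 1)) ▸ h01
      · rcases le_or_gt 0 (x 0 * x 2) with h02 | h02
        · refine ⟨1, fun i j hi hj => ?_⟩
          rcases tri i with rfl | rfl | rfl <;> rcases tri j with rfl | rfl | rfl <;>
            first
              | exact absurd rfl hi
              | exact absurd rfl hj
              | exact mul_self_nonneg _
              | exact h02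
              | exact (mul_comm (x 0) (x 2)) ▸ h02
        · have h12 : 0 ≤ x 1 * x 2 := by
            nlinarith [mul_pos_of_neg_of_neg h01 h02, sq_nonneg (x 0)]
          refine ⟨0, fun i j hi hj => ?_⟩
          rcases tri i with rfl | rfl | rfl <;> rcases tri j with rfl | rfl | rfl <;>
            first
              | exact absurd rfl hi
              | exact absurd rfl hj
              | exact mul_self_nonneg _
              | exact h12
              | exact (mul_comm (x 1) (x 2)) ▸ h12
    -- the phase-aligning unit vector
    set ε : Fin 3 → ℂ := fun i =>
      if i = k then 1 else if A k i = 0 then 1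
      else (starRingEnd ℂ) (A k i) / ((‖A k i‖ : ℝ) : ℂ) with hε
    have hεabs : ∀ i, ‖ε i‖ = 1 := by
      intro i
      simp only [hε]
      split_ifs with h1 h2
      · simp
      · simp
      · rw [norm_div, Complex.norm_conj, Complex.norm_real, Real.norm_eq_abs,
          abs_of_nonneg (norm_nonneg _), div_self]
        exact (norm_ne_zero_iff.mpr h2)
    set z : Fin 3 → ℂ := fun i => (x i : ℂ) * ε i with hz
    have h0 : 0 ≤ dotProduct (star z) (A.mulVec z) := hq z
    have hre : 0 ≤ (dotProduct (star z) (A.mulVec z)).re := (Complex.le_def.mp h0).1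
    -- termwise comparison
    have key : ∀ i j : Fin 3,
        ((starRingEnd ℂ) (z i) * (A i j * z j)).re ≤ x i * (‖A i j‖ * x j) := by
      intro i j
      set w : ℂ := (starRingEnd ℂ) (ε i) * ε j * A i j with hw
      have hzw : (starRingEnd ℂ) (z i) * (A i j * z j) = ((x i * x j : ℝ) : ℂ) * w := by
        simp only [hz, hw, map_mul, Complex.conj_ofReal]
        push_cast
        ring
      have hwabs : ‖w‖ ≤ ‖A i j‖ := by
        rw [hw, norm_mul, norm_mul, Complex.norm_conj, hεabs, hεabs, one_mul, one_mul]
      have hre_le : w.re ≤ ‖A i j‖ :=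
        le_trans (Complex.re_le_norm w) hwabs
      rw [hzw]
      have : (((x i * x j : ℝ) : ℂ) * w).re = (x i * x j) * w.re := by simp
      rw [this]
      by_cases hxx : 0 ≤ x i * x j
      · calc x i * x j * w.re ≤ x i * x j * ‖A i j‖ :=
              mul_le_mul_of_nonneg_left hre_le hxx
          _ = x i * (‖A i j‖ * x j) := by ring
      · -- then i = k or j = k, and the phase is exactly aligned
        have hik : i = k ∨ j = k := by
          by_contra hcon
          push_neg at hcon
          exact hxx (hk i j hcon.1 hcon.2)
        have hij : i ≠ j := by
          rintro rfl
          exact hxx (mul_self_nonneg _)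
        have hweq : w.re = ‖A i j‖ := by
          rcases hik with rfl | rfl
          · -- i = k
            have hjk : j ≠ i := fun h => hij h.symm
            by_cases hA0 : A i j = 0
            · simp [hw, hA0]
            · have hεj : ε j = (starRingEnd ℂ) (A i j) / ((‖A i j‖ : ℝ) : ℂ) := by
                simp [hε, hjk, hA0]
              have hεi : ε i = 1 := by simp [hε]
              rw [hw, hεi, hεj]
              have habs0 : ((‖A i j‖ : ℝ) : ℂ) ≠ 0 := by
                simpa using norm_ne_zero_iff.mpr hA0
              have : (starRingEnd ℂ) 1 * ((starRingEnd ℂ) (A i j) / ((‖A i j‖ : ℝ) : ℂ)) * A i j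
                  = ((‖A i j‖ : ℝ) : ℂ) := by
                rw [map_one, one_mul, div_mul_eq_mul_div, mul_comm, Complex.mul_conj,
                  Complex.normSq_eq_norm_sq, div_eq_iff habs0]
                push_cast
                ring
              rw [this, Complex.ofReal_re]
          · -- j = k
            have hij' : i ≠ j := hij
            by_cases hA0 : A j i = 0
            · have hAij0 : A i j = 0 := by
                have h := (herm i j).symm.trans hA0
                simpa using congrArg (starRingEnd ℂ) h
              rw [hw, hAij0]
              simp
            · have hεi : ε i = (starRingEnd ℂ) (A j i) / ((‖A j i‖ : ℝ) : ℂ) := by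
                simp [hε, hij', hA0]
              have hεj : ε j = 1 := by simp [hε]
              have hAij : A i j = (starRingEnd ℂ) (A j i) := herm j i
              have habs : ‖A i j‖ = ‖A j i‖ := by
                rw [hAij, Complex.norm_conj]
              have habs0 : ((‖A j i‖ : ℝ) : ℂ) ≠ 0 := by
                simpa using norm_ne_zero_iff.mpr hA0
              rw [hw, hεi, hεj, hAij, Complex.norm_conj]
              have hterm : (starRingEnd ℂ) ((starRingEnd ℂ) (A j i) / ((‖A j i‖ : ℝ) : ℂ)) * 1 *
                  (starRingEnd ℂ) (A j i) = ((‖A j i‖ : ℝ) : ℂ) := by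
                rw [map_div₀, Complex.conj_conj, Complex.conj_ofReal, mul_one,
                  div_mul_eq_mul_div, Complex.mul_conj, Complex.normSq_eq_norm_sq,
                  div_eq_iff habs0]
                push_cast
                ring
              rw [hterm, Complex.ofReal_re]
        rw [hweq]
        exact le_of_eq (by ring)
    -- assemble: sum the termwise inequalities
    have hsum : (dotProduct (star z) (A.mulVec z)).re
        ≤ dotProduct (star x) ((Matrix.of fun i j => (‖A i j‖ : ℝ)).mulVec x) := by
      simp only [dotProduct, Matrix.mulVec, Pi.star_apply, star_trivial,
        Matrix.of_apply, Finset.mul_sum]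
      rw [Complex.re_sum]
      refine Finset.sum_le_sum fun i _ => ?_
      rw [Complex.re_sum]
      exact Finset.sum_le_sum fun j _ => key i j
    exact le_trans hre hsum
end

section
/- There exists a 4×4 positive semi-definite complex matrix B = (b_ij) such that the matrix (|b_ij|) of entrywise absolute values is not positive semi-definite. -/
open ComplexOrder

noncomputable def sAux : ℝ := Real.sqrt (Real.sqrt 2)
noncomputable def cAux : ℝ := Real.sqrt (Real.sqrt 2)⁻¹

lemma sAux_mul_sAux : sAux * sAux = Real.sqrt 2 := by
  simpa [sAux] using Real.mul_self_sqrt (Real.sqrt_nonneg 2)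

lemma cAux_mul_cAux : cAux * cAux = (Real.sqrt 2)⁻¹ := by
  simpa [cAux] using Real.mul_self_sqrt (by positivity : (0:ℝ) ≤ (Real.sqrt 2)⁻¹)

lemma sAux_mul_cAux : sAux * cAux = 1 := by
  have h2 : Real.sqrt 2 ≠ 0 := by positivity
  rw [sAux, cAux, ← Real.sqrt_mul (Real.sqrt_nonneg 2), mul_inv_cancel₀ h2, Real.sqrt_one]

noncomputable def Aaux : Matrix (Fin 2) (Fin 4) ℂ :=
  !![(sAux : ℂ), (cAux : ℂ), 0, -(cAux : ℂ); 0, (cAux : ℂ), (sAux : ℂ), (cAux : ℂ)]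

noncomputable def Baux : Matrix (Fin 4) (Fin 4) ℂ :=
  !![((Real.sqrt 2 : ℝ) : ℂ), 1, 0, -1;
     1, ((Real.sqrt 2 : ℝ) : ℂ), 1, 0;
     0, 1, ((Real.sqrt 2 : ℝ) : ℂ), 1;
     -1, 0, 1, ((Real.sqrt 2 : ℝ) : ℂ)]

lemma two_cAux_sq : 2 * (cAux * cAux) = Real.sqrt 2 := by
  rw [cAux_mul_cAux, inv_eq_one_div, mul_one_div,
    div_eq_iff (by positivity : Real.sqrt 2 ≠ 0),
    Real.mul_self_sqrt (by norm_num : (0:ℝ) ≤ 2)]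

lemma Baux_eq : Baux = Aaux.conjTranspose * Aaux := by
  ext i j
  fin_cases i <;> fin_cases j <;>
    simp [Baux, Aaux, Matrix.mul_apply, Fin.sum_univ_two, Complex.conj_ofReal] <;>
    norm_cast <;>
    linarith [sAux_mul_sAux, sAux_mul_cAux, two_cAux_sq, mul_comm cAux sAux,
      pow_two sAux, pow_two cAux]

theorem exists_posSemidef_four_abs_not_posSemidef :
    ∃ B : Matrix (Fin 4) (Fin 4) ℂ, B.PosSemidef ∧
      ¬ (Matrix.of fun i j => (‖B i j‖ : ℝ)).PosSemidef := by
  refine ⟨Baux, by rw [Baux_eq]; exact Matrix.posSemidef_conjTranspose_mul_self Aaux, ?_⟩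
  intro h
  have hx := h.dotProduct_mulVec_nonneg ![1, -1, 1, -1]
  have habs : (Matrix.of fun i j => (‖Baux i j‖ : ℝ)) =
      !![Real.sqrt 2, 1, 0, 1; 1, Real.sqrt 2, 1, 0;
         0, 1, Real.sqrt 2, 1; 1, 0, 1, Real.sqrt 2] := by
    ext i j
    fin_cases i <;> fin_cases j <;>
      simp [Baux, Complex.norm_real, abs_of_nonneg (Real.sqrt_nonneg 2)]
  rw [habs] at hx
  have hlt : Real.sqrt 2 < 2 := by
    nlinarith [Real.sq_sqrt (by norm_num : (0:ℝ) ≤ 2), Real.sqrt_nonneg 2]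
  simp [dotProduct, Matrix.mulVec, Fin.sum_univ_four] at hx
  nlinarith [hx]
end

section
/- Let A = (A_ij)_{1≤i,j≤3} be a positive semi-definite matrix partitioned into nine n×n blocks. Then the 3×3 real matrix whose (i,j) entry is the trace norm tr|A_ij| (the sum of singular values of A_ij) is positive semi-definite. -/
open ComplexOrder

/-- The trace norm of a rectangular complex matrix: `tr ((Xᴴ X)^{1/2})`,
which equals the sum of the singular values of `X`. -/
noncomputable def traceNorm {m n : ℕ} (X : Matrix (Fin m) (Fin n) ℂ) : ℝ :=
  (((Matrix.posSemidef_conjTranspose_mul_self X).1.eigenvectorUnitary.1 *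
      Matrix.diagonal (((↑) : ℝ → ℂ) ∘ (√·) ∘ (Matrix.posSemidef_conjTranspose_mul_self X).1.eigenvalues) *
      (star (Matrix.posSemidef_conjTranspose_mul_self X).1.eigenvectorUnitary :
        Matrix (Fin n) (Fin n) ℂ)).trace).re

open Matrix

namespace TNAux

variable {n : ℕ}

/-- Column of a matrix as a Euclidean space vector. -/
def col (M : Matrix (Fin n) (Fin n) ℂ) (i : Fin n) : EuclideanSpace ℂ (Fin n) := WithLp.toLp 2 (fun k => M k i)

lemma inner_col (M N : Matrix (Fin n) (Fin n) ℂ) (i j : Fin n) :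
    (inner ℂ (col M i) (col N j) : ℂ) = (Mᴴ * N) i j := by
  simp [col, PiLp.inner_apply, Matrix.mul_apply, Matrix.conjTranspose_apply, mul_comm]

lemma trace_eq_sum_inner (U X W : Matrix (Fin n) (Fin n) ℂ) (hW : W * Wᴴ = 1) :
    Matrix.trace (U * X) = ∑ i, (inner ℂ (col (Uᴴ * W) i) (col (X * W) i) : ℂ) := by
  have h1 : (Uᴴ * W)ᴴ * (X * W) = (Wᴴ * (U * X)) * W := by
    simp only [conjTranspose_mul, conjTranspose_conjTranspose]
    rw [Matrix.mul_assoc, Matrix.mul_assoc, Matrix.mul_assoc]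
  have h2 : Matrix.trace (U * X) = Matrix.trace ((Uᴴ * W)ᴴ * (X * W)) := by
    rw [h1, Matrix.trace_mul_cycle, hW, Matrix.one_mul]
  rw [h2, Matrix.trace]
  simp only [inner_col, Matrix.diag_apply]

noncomputable def dd (X : Matrix (Fin n) (Fin n) ℂ) : Fin n → ℝ :=
  (Matrix.posSemidef_conjTranspose_mul_self X).1.eigenvalues

noncomputable def Wm (X : Matrix (Fin n) (Fin n) ℂ) : Matrix (Fin n) (Fin n) ℂ :=
  ((Matrix.posSemidef_conjTranspose_mul_self X).1.eigenvectorUnitary : Matrix (Fin n) (Fin n) ℂ)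

lemma Wm_mem (X : Matrix (Fin n) (Fin n) ℂ) : Wm X ∈ Matrix.unitaryGroup (Fin n) ℂ :=
  (Matrix.posSemidef_conjTranspose_mul_self X).1.eigenvectorUnitary.2

lemma dd_nonneg (X : Matrix (Fin n) (Fin n) ℂ) (i : Fin n) : 0 ≤ dd X i :=
  (Matrix.posSemidef_conjTranspose_mul_self X).eigenvalues_nonneg i

lemma gram (X : Matrix (Fin n) (Fin n) ℂ) :
    (X * Wm X)ᴴ * (X * Wm X) = Matrix.diagonal (fun i => (dd X i : ℂ)) := by
  have h := (Matrix.posSemidef_conjTranspose_mul_self X).1.conjStarAlgAut_star_eigenvectorUnitary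
  rw [Unitary.conjStarAlgAut_star_apply] at h
  calc (X * Wm X)ᴴ * (X * Wm X) = (Wm X)ᴴ * (Xᴴ * X) * (Wm X) := by
        simp only [conjTranspose_mul]; rw [Matrix.mul_assoc, Matrix.mul_assoc, Matrix.mul_assoc]
    _ = Matrix.diagonal (fun i => (dd X i : ℂ)) := by
        rw [← Matrix.star_eq_conjTranspose]; exact h

lemma traceNorm_eq (X : Matrix (Fin n) (Fin n) ℂ) :
    traceNorm X = ∑ i, Real.sqrt (dd X i) := by
  set hH := Matrix.posSemidef_conjTranspose_mul_self X
  rw [traceNorm]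
  rw [Matrix.trace_mul_cycle]
  rw [show (star hH.1.eigenvectorUnitary : Matrix (Fin n) (Fin n) ℂ) * hH.1.eigenvectorUnitary.1 = 1 from
    Matrix.UnitaryGroup.star_mul_self _]
  rw [Matrix.one_mul, Matrix.trace_diagonal]
  simp [dd, Complex.ofReal_re]

lemma inner_col_Y (X : Matrix (Fin n) (Fin n) ℂ) (i j : Fin n) :
    (inner ℂ (col (X * Wm X) i) (col (X * Wm X) j) : ℂ)
      = if i = j then (dd X i : ℂ) else 0 := by
  rw [inner_col, gram]
  by_cases h : i = j <;> simp [h, Matrix.diagonal_apply]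

lemma norm_col_Y (X : Matrix (Fin n) (Fin n) ℂ) (i : Fin n) :
    ‖col (X * Wm X) i‖ = Real.sqrt (dd X i) := by
  rw [norm_eq_sqrt_re_inner (𝕜 := ℂ)]
  rw [inner_col_Y]
  simp

/-- von Neumann-type inequality: `Re tr (U X) ≤ ‖X‖_tr` for unitary `U`. -/
lemma re_trace_le (X U : Matrix (Fin n) (Fin n) ℂ) (hU : U ∈ Matrix.unitaryGroup (Fin n) ℂ) :
    (Matrix.trace (U * X)).re ≤ traceNorm X := by
  rw [trace_eq_sum_inner U X (Wm X) (mem_unitaryGroup_iff.mp (Wm_mem X)), traceNorm_eq,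
    Complex.re_sum]
  apply Finset.sum_le_sum
  intro i _
  have hcc : ‖col (Uᴴ * Wm X) i‖ = 1 := by
    rw [norm_eq_sqrt_re_inner (𝕜 := ℂ), inner_col]
    have h1 : (Uᴴ * Wm X)ᴴ * (Uᴴ * Wm X) = 1 := by
      simp only [conjTranspose_mul, conjTranspose_conjTranspose]
      rw [Matrix.mul_assoc, ← Matrix.mul_assoc U Uᴴ, ← Matrix.star_eq_conjTranspose U,
        mem_unitaryGroup_iff.mp hU, Matrix.one_mul,
        ← Matrix.star_eq_conjTranspose (Wm X), mem_unitaryGroup_iff'.mp (Wm_mem X)]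
    rw [h1]
    simp
  calc (inner ℂ (col (Uᴴ * Wm X) i) (col (X * Wm X) i) : ℂ).re
      ≤ ‖(inner ℂ (col (Uᴴ * Wm X) i) (col (X * Wm X) i) : ℂ)‖ := Complex.re_le_norm _
    _ ≤ ‖col (Uᴴ * Wm X) i‖ * ‖col (X * Wm X) i‖ := norm_inner_le_norm _ _
    _ = Real.sqrt (dd X i) := by rw [hcc, norm_col_Y, one_mul]

/-- Attainment of the trace norm by a unitary (polar decomposition). -/
lemma exists_unitary_attains (X : Matrix (Fin n) (Fin n) ℂ) :
    ∃ U ∈ Matrix.unitaryGroup (Fin n) ℂ, (Matrix.trace (U * X)).re = traceNorm X := by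
  classical
  set Y := X * Wm X with hY
  set s : Set (Fin n) := {i | dd X i ≠ 0} with hs
  set v : Fin n → EuclideanSpace ℂ (Fin n) :=
    fun i => (((Real.sqrt (dd X i))⁻¹ : ℝ) : ℂ) • col Y i with hv
  have hinner_v : ∀ i j, (inner ℂ (v i) (v j) : ℂ)
      = (((Real.sqrt (dd X i))⁻¹ * (Real.sqrt (dd X j))⁻¹ : ℝ) : ℂ)
        * (if i = j then (dd X i : ℂ) else 0) := by
    intro i j
    rw [hv]
    simp only [inner_smul_left, inner_smul_right, Complex.conj_ofReal, hY, inner_col_Y]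
    push_cast
    by_cases h : i = j
    · subst h; simp only [if_pos rfl]; ring
    · simp only [if_neg h]; ring
  have hortho : Orthonormal ℂ (s.restrict v) := by
    rw [orthonormal_iff_ite]
    rintro ⟨i, hi⟩ ⟨j, hj⟩
    change inner ℂ (v i) (v j) = _
    rw [hinner_v]
    by_cases h : i = j
    · subst h
      have hd : 0 < dd X i := lt_of_le_of_ne (dd_nonneg X i) (Ne.symm hi)
      have hne : Real.sqrt (dd X i) ≠ 0 := ne_of_gt (Real.sqrt_pos.mpr hd)
      have hsq : Real.sqrt (dd X i) * Real.sqrt (dd X i) = dd X i :=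
        Real.mul_self_sqrt hd.le
      have h1 : (⟨i, hi⟩ : s) = ⟨i, hi⟩ := rfl
      rw [if_pos rfl, if_pos rfl]
      have : ((Real.sqrt (dd X i))⁻¹ * (Real.sqrt (dd X i))⁻¹) * dd X i = 1 := by
        field_simp
        rw [sq, hsq]
      rw [← Complex.ofReal_mul, ← Complex.ofReal_one, this]
    · have hne : (⟨i, hi⟩ : s) ≠ ⟨j, hj⟩ := by simpa using h
      simp [h, hne]
  obtain ⟨b, hb⟩ := hortho.exists_orthonormalBasis_extension_of_card_eq
    (by simp [finrank_euclideanSpace])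
  set Bm : Matrix (Fin n) (Fin n) ℂ := fun k i => b i k with hBm
  have hBmU : Bm ∈ Matrix.unitaryGroup (Fin n) ℂ := by
    rw [mem_unitaryGroup_iff']
    ext i j
    have := (orthonormal_iff_ite.mp b.orthonormal) i j
    simp only [Matrix.mul_apply, Matrix.star_apply, Matrix.one_apply]
    calc ∑ k, star (Bm k i) * Bm k j = (inner ℂ (b i) (b j) : ℂ) := by
          rw [PiLp.inner_apply]; simp [hBm, RCLike.inner_apply, mul_comm]
      _ = if i = j then 1 else 0 := this
  refine ⟨Wm X * Bmᴴ, ?_, ?_⟩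
  · rw [mem_unitaryGroup_iff]
    rw [Matrix.star_eq_conjTranspose, conjTranspose_mul, conjTranspose_conjTranspose]
    rw [Matrix.mul_assoc, ← Matrix.mul_assoc Bmᴴ Bm]
    rw [show Bmᴴ * Bm = 1 from by
      rw [← Matrix.star_eq_conjTranspose]; exact mem_unitaryGroup_iff'.mp hBmU]
    rw [Matrix.one_mul, ← Matrix.star_eq_conjTranspose]
    exact mem_unitaryGroup_iff.mp (Wm_mem X)
  · rw [trace_eq_sum_inner _ X (Wm X) (mem_unitaryGroup_iff.mp (Wm_mem X)), traceNorm_eq,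
      Complex.re_sum]
    have hUW : (Wm X * Bmᴴ)ᴴ * Wm X = Bm := by
      rw [conjTranspose_mul, conjTranspose_conjTranspose, Matrix.mul_assoc]
      rw [show (Wm X)ᴴ * Wm X = 1 from by
        rw [← Matrix.star_eq_conjTranspose]; exact mem_unitaryGroup_iff'.mp (Wm_mem X)]
      rw [Matrix.mul_one]
    rw [hUW]
    apply Finset.sum_congr rfl
    intro i _
    have hcolB : col Bm i = b i := rfl
    by_cases hi : i ∈ s
    · have hbi : b i = v i := hb i hi
      have hd : 0 < dd X i := lt_of_le_of_ne (dd_nonneg X i) (Ne.symm hi)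
      rw [hcolB, hbi, hv]
      rw [inner_smul_left]
      have : (inner ℂ (col Y i) (col Y i) : ℂ) = (dd X i : ℂ) := by
        rw [inner_col_Y]; simp
      rw [this, Complex.conj_ofReal]
      rw [show ((((Real.sqrt (dd X i))⁻¹ : ℝ) : ℂ) * (dd X i : ℂ))
          = ((((Real.sqrt (dd X i))⁻¹ * dd X i : ℝ)) : ℂ) from by push_cast; ring]
      rw [show (Real.sqrt (dd X i))⁻¹ * dd X i = Real.sqrt (dd X i) from by
        rw [inv_mul_eq_div, Real.div_sqrt]]
      simp
    · have hdi : dd X i = 0 := by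
        by_contra h; exact hi h
      have hYi : col Y i = 0 := by
        have h0 : (inner ℂ (col Y i) (col Y i) : ℂ) = 0 := by
          rw [inner_col_Y]; simp [hdi]
        exact inner_self_eq_zero.mp h0
      rw [hcolB, hYi, inner_zero_right, hdi]
      simp

lemma traceNorm_conjTranspose (X : Matrix (Fin n) (Fin n) ℂ) :
    traceNorm Xᴴ = traceNorm X := by
  have key : ∀ Z : Matrix (Fin n) (Fin n) ℂ, traceNorm Z ≤ traceNorm Zᴴ := by
    intro Z
    obtain ⟨U, hU, hUeq⟩ := exists_unitary_attains Z
    have hU' : Uᴴ ∈ Matrix.unitaryGroup (Fin n) ℂ := by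
      rw [← Matrix.star_eq_conjTranspose]; exact Unitary.star_mem hU
    have h1 : Matrix.trace (Uᴴ * Zᴴ) = star (Matrix.trace (U * Z)) := by
      rw [← Matrix.conjTranspose_mul, Matrix.trace_conjTranspose, Matrix.trace_mul_comm]
    have h2 : (Matrix.trace (Uᴴ * Zᴴ)).re = (Matrix.trace (U * Z)).re := by
      rw [h1]; exact Complex.conj_re _
    calc traceNorm Z = (Matrix.trace (Uᴴ * Zᴴ)).re := by rw [h2, hUeq]
      _ ≤ traceNorm Zᴴ := re_trace_le _ _ hU'
  refine le_antisymm ?_ (key X)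
  have := key Xᴴ
  rwa [Matrix.conjTranspose_conjTranspose] at this

lemma exists_lonely (v : Fin 3 → ℝ) :
    ∃ k : Fin 3, ∀ i j, i ≠ k → j ≠ k → (0 ≤ v i ↔ 0 ≤ v j) := by
  by_cases h01 : (0 ≤ v 0 ↔ 0 ≤ v 1)
  · by_cases h02 : (0 ≤ v 0 ↔ 0 ≤ v 2)
    · exact ⟨2, fun i j hi hj => by fin_cases i <;> fin_cases j <;> simp_all <;> tauto⟩
    · exact ⟨2, fun i j hi hj => by fin_cases i <;> fin_cases j <;> simp_all <;> tauto⟩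
  · by_cases h02 : (0 ≤ v 0 ↔ 0 ≤ v 2)
    · exact ⟨1, fun i j hi hj => by fin_cases i <;> fin_cases j <;> simp_all <;> tauto⟩
    · exact ⟨0, fun i j hi hj => by fin_cases i <;> fin_cases j <;> simp_all <;> tauto⟩

/-- The `(i,j)` block of a `3n × 3n` matrix. -/
def blk (A : Matrix (Fin 3 × Fin n) (Fin 3 × Fin n) ℂ) (i j : Fin 3) :
    Matrix (Fin n) (Fin n) ℂ := Matrix.of fun r s : Fin n => A (i, r) (j, s)

/-- The matrix of trace norms of blocks. -/
noncomputable def tt (A : Matrix (Fin 3 × Fin n) (Fin 3 × Fin n) ℂ) (i j : Fin 3) : ℝ :=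
  traceNorm (blk A i j)

end TNAux

open scoped MatrixOrder

open TNAux in
theorem trace_norm_blocks_posSemidef {n : ℕ}
    (A : Matrix (Fin 3 × Fin n) (Fin 3 × Fin n) ℂ) (hA : A.PosSemidef) :
    (Matrix.of fun i j : Fin 3 =>
      traceNorm (Matrix.of fun r s : Fin n => A (i, r) (j, s))).PosSemidef := by
  classical
  show (Matrix.of fun i j : Fin 3 => tt A i j).PosSemidef
  -- blocks of transposes
  have hblkT : ∀ i j, (blk A i j)ᴴ = blk A j i := by
    intro i j
    ext r s
    have h1 := congrFun (congrFun hA.1 (j, r)) (i, s)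
    simp only [Matrix.conjTranspose_apply] at h1 ⊢
    simpa [blk] using h1
  have htsymm : ∀ i j, tt A i j = tt A j i := by
    intro i j
    rw [tt, tt, ← hblkT j i, traceNorm_conjTranspose]
  -- Gram representation of the blocks
  set B := CFC.sqrt A with hBdef
  have hBB : B * B = A := CFC.sqrt_mul_sqrt_self A hA.nonneg
  have hBh : B.IsHermitian := (CFC.sqrt_nonneg A).posSemidef.1
  set XX : Fin 3 → Matrix (Fin 3 × Fin n) (Fin n) ℂ :=
    fun i => Matrix.of fun p s => B p (i, s) with hXXdef
  have hblk : ∀ i j, (XX i)ᴴ * XX j = blk A i j := by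
    intro i j
    ext r s
    rw [Matrix.mul_apply]
    simp only [Matrix.conjTranspose_apply, hXXdef, Matrix.of_apply, blk]
    rw [← hBB, Matrix.mul_apply]
    apply Finset.sum_congr rfl
    intro p _
    have h2 : star (B p (i, r)) = B (i, r) p := by
      have := congrFun (congrFun hBh.symm (i, r)) p
      simpa [Matrix.conjTranspose_apply] using this.symm
    rw [h2]
  -- Gram positivity
  have gramlem : ∀ (C : Fin 3 → Matrix (Fin n) (Fin n) ℂ) (v : Fin 3 → ℝ),
      0 ≤ (∑ i, ∑ j, ((v i * v j : ℝ) : ℂ)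
        * Matrix.trace ((C i)ᴴ * blk A i j * C j)).re := by
    intro C v
    set Z : Matrix (Fin 3 × Fin n) (Fin n) ℂ :=
      ∑ i, ((v i : ℝ) : ℂ) • (XX i * C i) with hZdef
    have expand : Matrix.trace (Zᴴ * Z)
        = ∑ i, ∑ j, ((v i * v j : ℝ) : ℂ)
            * Matrix.trace ((C i)ᴴ * blk A i j * C j) := by
      rw [hZdef, Matrix.conjTranspose_sum, Matrix.sum_mul, Matrix.trace_sum]
      apply Finset.sum_congr rfl
      intro i _
      rw [Matrix.mul_sum, Matrix.trace_sum]
      apply Finset.sum_congr rfl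
      intro j _
      rw [Matrix.conjTranspose_smul, Matrix.smul_mul, Matrix.mul_smul,
        Matrix.trace_smul, Matrix.trace_smul]
      rw [Matrix.conjTranspose_mul]
      have hassoc : (C i)ᴴ * (XX i)ᴴ * (XX j * C j) = (C i)ᴴ * blk A i j * C j := by
        rw [← hblk i j]
        rw [Matrix.mul_assoc, Matrix.mul_assoc, Matrix.mul_assoc]
      rw [hassoc, smul_smul]
      rw [Complex.star_def, Complex.conj_ofReal, smul_eq_mul]
      push_cast
      ring
    have pos : 0 ≤ (Matrix.trace (Zᴴ * Z)).re := by
      rw [Matrix.trace, Complex.re_sum]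
      apply Finset.sum_nonneg
      intro p _
      rw [Matrix.diag_apply, Matrix.mul_apply, Complex.re_sum]
      apply Finset.sum_nonneg
      intro q _
      rw [Matrix.conjTranspose_apply]
      rw [show (star (Z q p)) * Z q p = ((Complex.normSq (Z q p) : ℝ) : ℂ) from by
        rw [Complex.star_def, Complex.normSq_eq_conj_mul_self]]
      rw [Complex.ofReal_re]
      exact Complex.normSq_nonneg _
    rw [expand] at pos
    exact pos
  constructor
  · -- Hermitian part
    ext i j
    simp only [Matrix.conjTranspose_apply, Matrix.of_apply, star_trivial]
    exact htsymm j i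
  · intro v
    -- a "lonely" index k: all others have the same sign class
    obtain ⟨k, hk⟩ := exists_lonely v
    set C : Fin 3 → Matrix (Fin n) (Fin n) ℂ := fun i =>
      if (0 ≤ v i ↔ 0 ≤ v k) then 1
      else (exists_unitary_attains (blk A k i)).choose with hCdef
    have hCmem : ∀ i, C i ∈ Matrix.unitaryGroup (Fin n) ℂ := by
      intro i
      rw [hCdef]
      dsimp only
      split
      · exact one_mem _
      · exact ((exists_unitary_attains (blk A k i)).choose_spec).1
    have hpair : ∀ i j,
        v i * v j * (Matrix.trace ((C i)ᴴ * blk A i j * C j)).re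
          ≤ v i * v j * tt A i j := by
      intro i j
      by_cases hsign : 0 ≤ v i * v j
      · apply mul_le_mul_of_nonneg_left _ hsign
        have hmem : C j * (C i)ᴴ ∈ Matrix.unitaryGroup (Fin n) ℂ := by
          apply mul_mem (hCmem j)
          rw [← Matrix.star_eq_conjTranspose]
          exact Unitary.star_mem (hCmem i)
        rw [Matrix.trace_mul_cycle]
        exact re_trace_le _ _ hmem
      · push_neg at hsign
        have hne : ¬ (0 ≤ v i ↔ 0 ≤ v j) := by
          intro hiff
          rcases le_or_gt 0 (v i) with h | h
          · have := hiff.mp h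
            nlinarith
          · have h2 : ¬ (0 ≤ v j) := fun hj => absurd (hiff.mpr hj) (not_le.mpr h)
            push_neg at h2
            nlinarith
        have heq : (Matrix.trace ((C i)ᴴ * blk A i j * C j)).re = tt A i j := by
          rcases eq_or_ne i k with rfl | hik
          · have hCk : C i = 1 := by rw [hCdef]; simp
            have hCj : C j = (exists_unitary_attains (blk A i j)).choose := by
              simp only [hCdef]
              rw [if_neg (show ¬(0 ≤ v j ↔ 0 ≤ v i) from fun h => hne h.symm)]
            rw [hCk, hCj]
            simp only [Matrix.conjTranspose_one, Matrix.one_mul]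
            rw [Matrix.trace_mul_comm]
            exact ((exists_unitary_attains (blk A i j)).choose_spec).2
          · have hjk : j = k := by
              by_contra hjk
              exact hne (hk i j hik hjk)
            subst hjk
            have hCk : C j = 1 := by simp only [hCdef]; simp
            have hCi : C i = (exists_unitary_attains (blk A j i)).choose := by
              simp only [hCdef]
              rw [if_neg hne]
            rw [hCk, hCi, Matrix.mul_one]
            set U := (exists_unitary_attains (blk A j i)).choose with hUdef
            have hstar : Matrix.trace (Uᴴ * blk A i j)
                = star (Matrix.trace (U * blk A j i)) := by
              rw [← hblkT j i, ← Matrix.conjTranspose_mul,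
                Matrix.trace_conjTranspose, Matrix.trace_mul_comm]
            rw [hstar]
            rw [show (star (Matrix.trace (U * blk A j i))).re
              = (Matrix.trace (U * blk A j i)).re from Complex.conj_re _]
            rw [((exists_unitary_attains (blk A j i)).choose_spec).2]
            exact (htsymm i j).symm ▸ rfl
        rw [heq]
    have h0 : 0 ≤ ∑ i, ∑ j,
        v i * v j * (Matrix.trace ((C i)ᴴ * blk A i j * C j)).re := by
      have hg := gramlem C v
      rw [Complex.re_sum] at hg
      simp only [Complex.re_sum, Complex.re_ofReal_mul] at hg
      exact hg
    have hfin : (0:ℝ) ≤ ∑ i, ∑ j, v i * v j * tt A i j := by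
      refine le_trans h0 ?_
      apply Finset.sum_le_sum
      intro i _
      apply Finset.sum_le_sum
      intro j _
      exact hpair i j
    calc (0:ℝ) ≤ ∑ i, ∑ j, v i * v j * tt A i j := hfin
      _ = dotProduct (star v)
          ((Matrix.of fun i j : Fin 3 => tt A i j) *ᵥ v) := by
        rw [dotProduct]
        apply Finset.sum_congr rfl
        intro i _
        rw [Matrix.mulVec, dotProduct]
        simp only [Matrix.of_apply, Pi.star_apply, star_trivial]
        rw [Finset.mul_sum]
        apply Finset.sum_congr rfl
        intro j _
        ring
      _ = v.sum fun i xi => v.sum fun j xj => star xi * (Matrix.of fun i j : Fin 3 => tt A i j) i j * xj := by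
          simp [Finsupp.sum_fintype, dotProduct, mulVec, Finset.mul_sum, mul_assoc]
end

section
/- Let A = (A_ij)_{1≤i,j≤2} be a positive semi-definite matrix partitioned into n×n blocks, and let ||·|| be any unitarily invariant norm on M_n(C). Then the 2×2 matrix (||A_ij||) is positive semi-definite; equivalently, ||A_12||^2 ≤ ||A_11||·||A_22||. -/
open Matrix ComplexOrder
open scoped ComplexInnerProductSpace

noncomputable section

variable {n : ℕ}


lemma polar_exists (B : Matrix (Fin n) (Fin n) ℂ) :
    ∃ U P : Matrix (Fin n) (Fin n) ℂ,
      U ∈ Matrix.unitaryGroup (Fin n) ℂ ∧ P.PosSemidef ∧ B = U * P := by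
  have hBB : (Bᴴ * B).PosSemidef := Matrix.posSemidef_conjTranspose_mul_self B
  set V : Matrix (Fin n) (Fin n) ℂ := (hBB.1.eigenvectorUnitary : Matrix (Fin n) (Fin n) ℂ) with hV
  have hVmem : V ∈ Matrix.unitaryGroup (Fin n) ℂ := hBB.1.eigenvectorUnitary.2
  have hV1 : Vᴴ * V = 1 := by
    rw [← Matrix.star_eq_conjTranspose]; exact Matrix.mem_unitaryGroup_iff'.mp hVmem
  have hV2 : V * Vᴴ = 1 := by
    rw [← Matrix.star_eq_conjTranspose]; exact Matrix.mem_unitaryGroup_iff.mp hVmem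
  set d : Fin n → ℝ := hBB.1.eigenvalues with hd
  have hdpos : ∀ i, 0 ≤ d i := hBB.eigenvalues_nonneg
  have hspec : Bᴴ * B = V * diagonal (fun i => (d i : ℂ)) * Vᴴ := by
    exact hBB.1.spectral_theorem
  set C : Matrix (Fin n) (Fin n) ℂ := B * V with hC
  have hCC : Cᴴ * C = diagonal (fun i => (d i : ℂ)) := by
    have : Cᴴ * C = Vᴴ * (Bᴴ * B) * V := by
      rw [hC, conjTranspose_mul]; simp only [Matrix.mul_assoc]
    rw [this, hspec]
    calc Vᴴ * (V * diagonal (fun i => (d i : ℂ)) * Vᴴ) * V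
        = (Vᴴ * V) * diagonal (fun i => (d i : ℂ)) * (Vᴴ * V) := by
          simp only [mul_assoc]
      _ = diagonal (fun i => (d i : ℂ)) := by rw [hV1]; simp
  set c : Fin n → EuclideanSpace ℂ (Fin n) :=
    fun i => (WithLp.equiv 2 _).symm (fun r => C r i) with hc
  have hca : ∀ i r, c i r = C r i := fun i r => rfl
  have hinner : ∀ i j, ⟪c i, c j⟫ = diagonal (fun i => (d i : ℂ)) i j := by
    intro i j
    rw [← hCC, Matrix.mul_apply, PiLp.inner_apply]
    apply Finset.sum_congr rfl
    intro r _
    simp [hca, conjTranspose_apply, RCLike.inner_apply, mul_comm]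
  set v : Fin n → EuclideanSpace ℂ (Fin n) :=
    fun i => ((Real.sqrt (d i) : ℂ))⁻¹ • c i with hv
  set s : Set (Fin n) := {i | d i ≠ 0} with hs
  have horth : Orthonormal ℂ (s.restrict v) := by
    rw [orthonormal_iff_ite]
    rintro ⟨i, hi⟩ ⟨j, hj⟩
    simp only [Set.restrict_apply, hv]
    change ⟪((Real.sqrt (d i) : ℂ))⁻¹ • c i, ((Real.sqrt (d j) : ℂ))⁻¹ • c j⟫ = _
    rw [inner_smul_left, inner_smul_right, hinner]
    by_cases hij : i = j
    · subst hij
      rw [diagonal_apply_eq, if_pos (Subtype.ext rfl), map_inv₀, Complex.conj_ofReal]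
      have hsqc : ((d i : ℂ)) = (Real.sqrt (d i) : ℂ) * (Real.sqrt (d i) : ℂ) := by
        rw [← Complex.ofReal_mul, Real.mul_self_sqrt (hdpos i)]
      have hsq : (Real.sqrt (d i) : ℂ) ≠ 0 := by
        simp only [ne_eq, Complex.ofReal_eq_zero]
        exact fun h => hi (Real.sqrt_eq_zero (hdpos i) |>.mp h)
      rw [hsqc]
      field_simp
    · have : ((⟨i, hi⟩ : s) = ⟨j, hj⟩) ↔ False := by simp [Subtype.ext_iff, hij]
      rw [diagonal_apply_ne _ hij]
      simp [this, hij]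
  have hcard : Module.finrank ℂ (EuclideanSpace ℂ (Fin n)) = Fintype.card (Fin n) := by
    simp
  obtain ⟨b, hb⟩ := horth.exists_orthonormalBasis_extension_of_card_eq hcard
  set U₀ : Matrix (Fin n) (Fin n) ℂ := Matrix.of fun r i => b i r with hU₀
  have hU₀mem : U₀ ∈ Matrix.unitaryGroup (Fin n) ℂ := by
    rw [Matrix.mem_unitaryGroup_iff']
    ext i j
    rw [Matrix.mul_apply, Matrix.one_apply]
    have := orthonormal_iff_ite.mp b.orthonormal i j
    rw [PiLp.inner_apply] at this
    simpa [Matrix.star_eq_conjTranspose, conjTranspose_apply, hU₀,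
      RCLike.inner_apply, mul_comm] using this
  have hcol : U₀ * diagonal (fun i => (Real.sqrt (d i) : ℂ)) = C := by
    ext r i
    rw [Matrix.mul_diagonal]
    by_cases hi : d i = 0
    · have hci : c i = 0 := by
        rw [← inner_self_eq_zero (𝕜 := ℂ)]
        rw [hinner]
        simp [hi]
      have : C r i = 0 := by rw [← hca i r, hci]; rfl
      simp [hi, this]
    · have hbv : b i = v i := hb i hi
      have hsq : (Real.sqrt (d i) : ℂ) ≠ 0 := by
        simp only [ne_eq, Complex.ofReal_eq_zero]
        exact fun h => hi (Real.sqrt_eq_zero (hdpos i) |>.mp h)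
      have : U₀ r i = ((Real.sqrt (d i) : ℂ))⁻¹ * C r i := by
        rw [hU₀]
        show b i r = _
        rw [hbv]
        simp [hv, hca, PiLp.smul_apply, smul_eq_mul]
      rw [this]
      field_simp
  refine ⟨U₀ * Vᴴ, V * diagonal (fun i => (Real.sqrt (d i) : ℂ)) * Vᴴ, ?_, ?_, ?_⟩
  · have := mul_mem hU₀mem (Unitary.star_mem hVmem)
    simpa [Matrix.star_eq_conjTranspose] using this
  · refine Matrix.PosSemidef.mul_mul_conjTranspose_same ?_ V
    refine Matrix.PosSemidef.diagonal ?_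
    intro i
    simp only [Pi.zero_apply]
    rw [Complex.zero_le_real]
    exact Real.sqrt_nonneg _
  · calc B = B * (V * Vᴴ) := by rw [hV2, mul_one]
      _ = C * Vᴴ := by rw [hC, mul_assoc]
      _ = (U₀ * diagonal (fun i => (Real.sqrt (d i) : ℂ))) * Vᴴ := by rw [hcol]
      _ = (U₀ * Vᴴ) * (V * diagonal (fun i => (Real.sqrt (d i) : ℂ)) * Vᴴ) := by
          rw [mul_assoc U₀ Vᴴ, ← mul_assoc Vᴴ (V * diagonal fun i => (Real.sqrt (d i) : ℂ)) Vᴴ,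
            ← mul_assoc Vᴴ V, hV1, one_mul, ← mul_assoc]


lemma psd_diag_re_nonneg {M : Matrix (Fin n) (Fin n) ℂ} (hM : M.PosSemidef) (i : Fin n) :
    0 ≤ (M i i).re := by
  have := hM.re_dotProduct_nonneg (Pi.single i 1)
  simpa [dotProduct, Pi.single_apply, mulVec, Finset.sum_ite_eq] using this

lemma psd_trace_re_nonneg {M : Matrix (Fin n) (Fin n) ℂ} (hM : M.PosSemidef) :
    0 ≤ (M.trace).re := by
  rw [Matrix.trace, Complex.re_sum]
  exact Finset.sum_nonneg fun i _ => psd_diag_re_nonneg hM i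

lemma trace_psd_mul_psd_re_nonneg {A B : Matrix (Fin n) (Fin n) ℂ}
    (hA : A.PosSemidef) (hB : B.PosSemidef) : 0 ≤ ((A * B).trace).re := by
  obtain ⟨S, rfl⟩ : ∃ S : Matrix (Fin n) (Fin n) ℂ, B = Sᴴ * S := by
    open scoped MatrixOrder in exact CStarAlgebra.nonneg_iff_eq_star_mul_self.mp hB.nonneg
  have h1 : (A * (Sᴴ * S)).trace = (S * A * Sᴴ).trace := by
    rw [← Matrix.mul_assoc, Matrix.trace_mul_comm, Matrix.mul_assoc]
  rw [h1]
  exact psd_trace_re_nonneg (hA.mul_mul_conjTranspose_same S)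

lemma conj3 {V D₁ D₂ : Matrix (Fin n) (Fin n) ℂ} (hV : Vᴴ * V = 1) :
    (V * D₁ * Vᴴ) * (V * D₂ * Vᴴ) = V * (D₁ * D₂) * Vᴴ := by
  simp only [Matrix.mul_assoc]
  rw [← Matrix.mul_assoc Vᴴ V (D₂ * Vᴴ), hV, Matrix.one_mul]

lemma herm_parts {H : Matrix (Fin n) (Fin n) ℂ} (hH : H.IsHermitian) :
    ∃ Hp Hm W : Matrix (Fin n) (Fin n) ℂ, Hp.PosSemidef ∧ Hm.PosSemidef ∧
      W ∈ Matrix.unitaryGroup (Fin n) ℂ ∧ H = Hp - Hm ∧ H * W = Hp + Hm := by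
  set V : Matrix (Fin n) (Fin n) ℂ := (hH.eigenvectorUnitary : Matrix (Fin n) (Fin n) ℂ) with hV
  have hVmem : V ∈ Matrix.unitaryGroup (Fin n) ℂ := hH.eigenvectorUnitary.2
  have hV1 : Vᴴ * V = 1 := by
    rw [← Matrix.star_eq_conjTranspose]; exact Matrix.mem_unitaryGroup_iff'.mp hVmem
  set e : Fin n → ℝ := hH.eigenvalues with he
  have hspec : H = V * diagonal (fun i => (e i : ℂ)) * Vᴴ := by
    exact hH.spectral_theorem
  refine ⟨V * diagonal (fun i => ((max (e i) 0 : ℝ) : ℂ)) * Vᴴ,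
    V * diagonal (fun i => ((max (-(e i)) 0 : ℝ) : ℂ)) * Vᴴ,
    V * diagonal (fun i => (if e i < 0 then (-1 : ℂ) else 1)) * Vᴴ, ?_, ?_, ?_, ?_, ?_⟩
  · refine Matrix.PosSemidef.mul_mul_conjTranspose_same (Matrix.PosSemidef.diagonal ?_) V
    intro i
    simp only [Pi.zero_apply]
    rw [Complex.zero_le_real]
    exact le_max_right _ _
  · refine Matrix.PosSemidef.mul_mul_conjTranspose_same (Matrix.PosSemidef.diagonal ?_) V
    intro i
    simp only [Pi.zero_apply]
    rw [Complex.zero_le_real]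
    exact le_max_right _ _
  · rw [Matrix.mem_unitaryGroup_iff', Matrix.star_eq_conjTranspose]
    have hstar : star (fun i => (if e i < 0 then (-1 : ℂ) else 1))
        = (fun i => (if e i < 0 then (-1 : ℂ) else 1)) := by
      funext i
      by_cases h : e i < 0 <;> simp [h, Pi.star_apply]
    have hct : (V * diagonal (fun i => (if e i < 0 then (-1 : ℂ) else 1)) * Vᴴ)ᴴ
        = V * diagonal (fun i => (if e i < 0 then (-1 : ℂ) else 1)) * Vᴴ := by
      simp only [Matrix.conjTranspose_mul, Matrix.conjTranspose_conjTranspose,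
        Matrix.diagonal_conjTranspose, hstar, Matrix.mul_assoc]
    rw [hct, conj3 hV1, Matrix.diagonal_mul_diagonal]
    have hone : (fun i => (if e i < 0 then (-1 : ℂ) else 1) * (if e i < 0 then (-1 : ℂ) else 1))
        = fun _ => (1 : ℂ) := by
      funext i; by_cases h : e i < 0 <;> simp [h]
    rw [hone, Matrix.diagonal_one, Matrix.mul_one, ← Matrix.star_eq_conjTranspose]
    exact Matrix.mem_unitaryGroup_iff.mp hVmem
  · have hd : diagonal (fun i => ((max (e i) 0 : ℝ) : ℂ))
        - diagonal (fun i => ((max (-(e i)) 0 : ℝ) : ℂ)) = diagonal (fun i => (e i : ℂ)) := by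
      ext i j
      rcases eq_or_ne i j with rfl | hij
      · simp only [Matrix.sub_apply, Matrix.diagonal_apply_eq]
        rw [← Complex.ofReal_sub]
        congr 1
        rcases le_total (e i) 0 with h | h
        · rw [max_eq_right h, max_eq_left (by linarith)]; ring
        · rw [max_eq_left h, max_eq_right (by linarith)]; ring
      · simp [Matrix.diagonal_apply_ne _ hij]
    rw [hspec, ← sub_mul, ← mul_sub, hd]
  · have hd : diagonal (fun i => (e i : ℂ)) * diagonal (fun i => (if e i < 0 then (-1 : ℂ) else 1))
        = diagonal (fun i => ((max (e i) 0 : ℝ) : ℂ))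
          + diagonal (fun i => ((max (-(e i)) 0 : ℝ) : ℂ)) := by
      rw [Matrix.diagonal_mul_diagonal]
      ext i j
      rcases eq_or_ne i j with rfl | hij
      · simp only [Matrix.add_apply, Matrix.diagonal_apply_eq]
        rcases lt_or_ge (e i) 0 with h | h
        · rw [if_pos h, ← Complex.ofReal_add, max_eq_right h.le, max_eq_left (by linarith)]
          push_cast; ring
        · rw [if_neg (not_lt.mpr h), ← Complex.ofReal_add, max_eq_left h,
            max_eq_right (by linarith)]
          push_cast; ring
      · simp [Matrix.diagonal_apply_ne _ hij]
    rw [hspec, conj3 hV1, hd, Matrix.mul_add, Matrix.add_mul]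

variable (N : Matrix (Fin n) (Fin n) ℂ → ℝ)

lemma N_left (hinv : ∀ U V B, U ∈ Matrix.unitaryGroup (Fin n) ℂ →
      V ∈ Matrix.unitaryGroup (Fin n) ℂ → N (U * B * V) = N B)
    {U : Matrix (Fin n) (Fin n) ℂ} (hU : U ∈ Matrix.unitaryGroup (Fin n) ℂ)
    (B : Matrix (Fin n) (Fin n) ℂ) : N (U * B) = N B := by
  have := hinv U 1 B hU (one_mem _)
  simpa using this

lemma N_right (hinv : ∀ U V B, U ∈ Matrix.unitaryGroup (Fin n) ℂ →
      V ∈ Matrix.unitaryGroup (Fin n) ℂ → N (U * B * V) = N B)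
    {U : Matrix (Fin n) (Fin n) ℂ} (hU : U ∈ Matrix.unitaryGroup (Fin n) ℂ)
    (B : Matrix (Fin n) (Fin n) ℂ) : N (B * U) = N B := by
  have := hinv 1 U B (one_mem _) hU
  simpa using this

lemma mono
    (hpos : ∀ B, 0 ≤ N B) (hzero : ∀ B, N B = 0 → B = 0)
    (htri : ∀ B C, N (B + C) ≤ N B + N C)
    (hsmul : ∀ (c : ℂ) B, N (c • B) = ‖c‖ * N B)
    (hinv : ∀ U V B, U ∈ Matrix.unitaryGroup (Fin n) ℂ →
      V ∈ Matrix.unitaryGroup (Fin n) ℂ → N (U * B * V) = N B)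
    (hconj : ∀ B, N Bᴴ = N B)
    {P R : Matrix (Fin n) (Fin n) ℂ} (hP : P.PosSemidef) (hRP : (R - P).PosSemidef) :
    N P ≤ N R := by
  letI : NormedAddCommGroup (Matrix (Fin n) (Fin n) ℂ) :=
    AddGroupNorm.toNormedAddCommGroup
      { toFun := N
        map_zero' := by simpa using hsmul 0 0
        add_le' := htri
        neg' := fun x => by simpa using hsmul (-1) x
        eq_zero_of_map_eq_zero' := fun x hx => hzero x hx }
  letI : NormedSpace ℝ (Matrix (Fin n) (Fin n) ℂ) :=
    { norm_smul_le := fun r x => by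
        have h1 : r • x = ((r : ℂ)) • x := by
          ext i j
          simp [Matrix.smul_apply, Complex.real_smul]
        have h2 : ‖r • x‖ = N ((r : ℂ) • x) := by rw [h1]; rfl
        have h3 : ‖x‖ = N x := rfl
        rw [h2, hsmul, h3, Complex.norm_real, Real.norm_eq_abs] }
  have hnorm : ∀ T : Matrix (Fin n) (Fin n) ℂ, ‖T‖ = N T := fun _ => rfl
  obtain ⟨g, hgle, hgP⟩ := exists_dual_vector'' ℝ P
  have hgbound : ∀ T, g T ≤ N T := by
    intro T
    calc g T ≤ |g T| := le_abs_self _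
      _ = ‖g T‖ := (Real.norm_eq_abs _).symm
      _ ≤ ‖g‖ * ‖T‖ := g.le_opNorm T
      _ ≤ 1 * N T := by
          rw [hnorm]
          exact mul_le_mul_of_nonneg_right hgle (hpos T)
      _ = N T := one_mul _
  set Z : Matrix (Fin n) (Fin n) ℂ := Matrix.of fun j k =>
    (g (single j k 1) : ℂ) + Complex.I * (g (single j k Complex.I) : ℂ) with hZ
  have hZre : ∀ j k, (Z j k).re = g (single j k 1) := by
    intro j k; simp [hZ]
  have hZim : ∀ j k, (Z j k).im = g (single j k Complex.I) := by
    intro j k; simp [hZ]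
  have hrep : ∀ X, ((Zᴴ * X).trace).re = g X := by
    intro X
    have hLHS : ((Zᴴ * X).trace).re
        = ∑ k, ∑ j, ((Z j k).re * (X j k).re + (Z j k).im * (X j k).im) := by
      rw [Matrix.trace, Complex.re_sum]
      apply Finset.sum_congr rfl
      intro k _
      rw [Matrix.diag_apply, Matrix.mul_apply, Complex.re_sum]
      apply Finset.sum_congr rfl
      intro j _
      simp only [Matrix.conjTranspose_apply, Complex.star_def, Complex.mul_re, Complex.conj_re, Complex.conj_im]
      ring
    rw [hLHS]
    conv_rhs => rw [matrix_eq_sum_single X]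
    rw [map_sum]
    rw [Finset.sum_comm]
    apply Finset.sum_congr rfl
    intro j _
    rw [map_sum]
    apply Finset.sum_congr rfl
    intro k _
    have hc : (X j k) = (X j k).re • (1 : ℂ) + (X j k).im • Complex.I := by
      simp [Complex.real_smul, Complex.re_add_im]
    have hdec : single j k (X j k)
        = (X j k).re • single j k (1 : ℂ)
          + (X j k).im • single j k Complex.I := by
      conv_lhs => rw [hc]
      rw [single_add, ← smul_single, ← smul_single]
    rw [hdec, map_add, _root_.map_smul, _root_.map_smul, ← hZre j k, ← hZim j k]
    simp only [smul_eq_mul]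
    ring
  have hZbound : ∀ T, ((Zᴴ * T).trace).re ≤ N T := fun T => (hrep T) ▸ hgbound T
  have hZconj : ∀ T, ((Z * T).trace).re = ((Zᴴ * Tᴴ).trace).re := by
    intro T
    have h1 : star ((Zᴴ * Tᴴ).trace) = (Z * T).trace := by
      rw [← Matrix.trace_conjTranspose, Matrix.conjTranspose_mul,
        Matrix.conjTranspose_conjTranspose, Matrix.conjTranspose_conjTranspose,
        Matrix.trace_mul_comm]
    rw [← h1]
    exact (Complex.conj_re _).symm
  set H : Matrix (Fin n) (Fin n) ℂ := (2⁻¹ : ℂ) • (Z + Zᴴ) with hHdef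
  have hHherm : H.IsHermitian := by
    have : Hᴴ = H := by
      rw [hHdef, Matrix.conjTranspose_smul, Matrix.conjTranspose_add,
        Matrix.conjTranspose_conjTranspose]
      rw [add_comm Zᴴ Z]
      congr 1
      simp [Complex.ext_iff]
    exact this
  have hHtr : ∀ T : Matrix (Fin n) (Fin n) ℂ, ((H * T).trace).re
      = 2⁻¹ * (((Zᴴ * T).trace).re + ((Z * T).trace).re) := by
    intro T
    calc ((H * T).trace).re = ((2⁻¹ : ℂ) * ((Z * T).trace + (Zᴴ * T).trace)).re := by
          rw [hHdef, smul_mul_assoc, Matrix.trace_smul, smul_eq_mul, add_mul, Matrix.trace_add]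
      _ = 2⁻¹ * (((Z * T).trace).re + ((Zᴴ * T).trace).re) := by
          rw [show ((2⁻¹ : ℂ)) = ((2⁻¹ : ℝ) : ℂ) by norm_num, Complex.re_ofReal_mul,
            Complex.add_re]
      _ = 2⁻¹ * (((Zᴴ * T).trace).re + ((Z * T).trace).re) := by ring
  have hHbound : ∀ T, ((H * T).trace).re ≤ N T := by
    intro T
    rw [hHtr, hZconj T]
    have b1 := hZbound T
    have b2 : ((Zᴴ * Tᴴ).trace).re ≤ N T := by
      have := hZbound Tᴴ
      rwa [hconj] at this
    linarith
  have hHP : ((H * P).trace).re = N P := by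
    rw [hHtr, hZconj P, hP.1.eq, hrep P]
    rw [hnorm] at hgP
    have hgP' : g P = N P := by exact_mod_cast hgP
    rw [hgP']
    ring
  obtain ⟨Hp, Hm, W, hHp, hHm, hWmem, hsplit, hmulW⟩ := herm_parts hHherm
  have e1 : N P ≤ ((Hp * P).trace).re := by
    rw [← hHP]
    have hs : H * P = Hp * P - Hm * P := by rw [hsplit, sub_mul]
    rw [hs, Matrix.trace_sub, Complex.sub_re]
    have := trace_psd_mul_psd_re_nonneg hHm hP
    linarith
  have e2 : ((Hp * P).trace).re ≤ ((Hp * R).trace).re := by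
    have h3 : ((Hp * (R - P)).trace).re = ((Hp * R).trace).re - ((Hp * P).trace).re := by
      rw [mul_sub, Matrix.trace_sub, Complex.sub_re]
    have h4 := trace_psd_mul_psd_re_nonneg hHp hRP
    rw [h3] at h4
    linarith
  have e3 : ((Hp * R).trace).re ≤ N R := by
    have h2 : H + H * W = (2 : ℂ) • Hp := by
      calc H + H * W = (Hp - Hm) + (Hp + Hm) := by rw [← hmulW, ← hsplit]
        _ = (2 : ℂ) • Hp := by
            rw [two_smul]
            abel
    have hsm : (2⁻¹ : ℂ) • ((2 : ℂ) • Hp) = Hp := by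
      rw [smul_smul]
      norm_num
    have hHpeq : Hp * R = (2⁻¹ : ℂ) • (H * R + H * (W * R)) := by
      conv_lhs => rw [← hsm]
      rw [← h2, smul_mul_assoc, add_mul, mul_assoc]
    rw [hHpeq, Matrix.trace_smul, smul_eq_mul,
      show ((2⁻¹ : ℂ)) = ((2⁻¹ : ℝ) : ℂ) by norm_num, Complex.re_ofReal_mul,
      Matrix.trace_add, Complex.add_re]
    have b1 := hHbound R
    have b2 : ((H * (W * R)).trace).re ≤ N R := by
      have := hHbound (W * R)
      rwa [N_left N hinv hWmem R] at this
    linarith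
  linarith [e1, e2, e3]



lemma psd_smul_real {c : ℝ} {M : Matrix (Fin n) (Fin n) ℂ} (hc : 0 ≤ c) (hM : M.PosSemidef) :
    (((c : ℂ)) • M).PosSemidef := by
  refine .of_dotProduct_mulVec_nonneg ?_ ?_
  · have : ((c : ℂ) • M)ᴴ = (c : ℂ) • M := by
      rw [Matrix.conjTranspose_smul, Complex.star_def, Complex.conj_ofReal, hM.1.eq]
    exact this
  · intro x
    rw [Matrix.smul_mulVec, dotProduct_smul, smul_eq_mul]
    exact mul_nonneg (by rw [Complex.zero_le_real]; exact hc) (hM.dotProduct_mulVec_nonneg x)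

lemma block11_psd {A B C : Matrix (Fin n) (Fin n) ℂ}
    (hM : (Matrix.fromBlocks A B Bᴴ C).PosSemidef) : A.PosSemidef := by
  have h := hM.submatrix Sum.inl
  have he : (Matrix.fromBlocks A B Bᴴ C).submatrix Sum.inl Sum.inl = A := by
    ext i j; rfl
  rwa [he] at h

lemma block22_psd {A B C : Matrix (Fin n) (Fin n) ℂ}
    (hM : (Matrix.fromBlocks A B Bᴴ C).PosSemidef) : C.PosSemidef := by
  have h := hM.submatrix Sum.inr
  have he : (Matrix.fromBlocks A B Bᴴ C).submatrix Sum.inr Sum.inr = C := by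
    ext i j; rfl
  rwa [he] at h

lemma conj_blocks {A B C X₁ X₂ : Matrix (Fin n) (Fin n) ℂ}
    (hM : (Matrix.fromBlocks A B Bᴴ C).PosSemidef) :
    (Matrix.fromBlocks (X₁ᴴ * A * X₁) (X₁ᴴ * B * X₂) ((X₁ᴴ * B * X₂)ᴴ) (X₂ᴴ * C * X₂)).PosSemidef := by
  have h := hM.conjTranspose_mul_mul_same (Matrix.fromBlocks X₁ 0 0 X₂)
  have he : (Matrix.fromBlocks X₁ 0 0 X₂)ᴴ * (Matrix.fromBlocks A B Bᴴ C)
        * (Matrix.fromBlocks X₁ 0 0 X₂)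
      = Matrix.fromBlocks (X₁ᴴ * A * X₁) (X₁ᴴ * B * X₂) ((X₁ᴴ * B * X₂)ᴴ) (X₂ᴴ * C * X₂) := by
    rw [Matrix.fromBlocks_conjTranspose, Matrix.fromBlocks_multiply, Matrix.fromBlocks_multiply]
    simp [Matrix.conjTranspose_mul, Matrix.mul_assoc, Matrix.conjTranspose_conjTranspose]
  rwa [he] at h

lemma sub_blocks_psd {A P C : Matrix (Fin n) (Fin n) ℂ} (hPh : P.IsHermitian)
    (hM : (Matrix.fromBlocks A P Pᴴ C).PosSemidef) : (A + C - (P + P)).PosSemidef := by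
  refine .of_dotProduct_mulVec_nonneg ?_ ?_
  · have hA := (block11_psd hM).1
    have hC := (block22_psd hM).1
    exact ((hA.add hC).sub (hPh.add hPh))
  · intro x
    have h := hM.dotProduct_mulVec_nonneg (Sum.elim x (-x))
    have hstar : star (Sum.elim x (-x)) = Sum.elim (star x) (-(star x)) := by
      funext i; cases i <;> simp [Pi.star_apply]
    rw [Matrix.fromBlocks_mulVec, hstar, sumElim_dotProduct_sumElim] at h
    have he : star x ⬝ᵥ ((A + C - (P + P)) *ᵥ x)
        = star x ⬝ᵥ (A *ᵥ x + P *ᵥ (-x)) + (-(star x)) ⬝ᵥ (Pᴴ *ᵥ x + C *ᵥ (-x)) := by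
      rw [hPh.eq]
      simp only [Matrix.add_mulVec, Matrix.sub_mulVec, Matrix.mulVec_neg, dotProduct_add,
        dotProduct_sub, dotProduct_neg, neg_dotProduct, neg_neg]
      ring
    rw [he]
    exact h

lemma cs_of_am {a b c : ℝ} (ha : 0 ≤ a) (hb : 0 ≤ b) (hc : 0 ≤ c)
    (h : ∀ t : ℝ, 0 < t → b ≤ (t * a + t⁻¹ * c) / 2) : b ^ 2 ≤ a * c := by
  by_cases ha0 : a = 0
  · have hb0 : b = 0 := by
      by_contra hb0
      have hbpos : 0 < b := lt_of_le_of_ne hb (Ne.symm hb0)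
      set t := c / b + 1 with ht
      have htpos : 0 < t := by positivity
      have h1 := h t htpos
      rw [ha0] at h1
      have h2 : t * b ≤ t * ((t * 0 + t⁻¹ * c) / 2) :=
        mul_le_mul_of_nonneg_left h1 htpos.le
      have h3 : t * ((t * 0 + t⁻¹ * c) / 2) = c / 2 := by
        field_simp
        ring
      rw [h3, ht] at h2
      have : (c / b + 1) * b = c + b := by field_simp
      rw [this] at h2
      nlinarith
    rw [hb0, ha0]
    nlinarith
  · by_cases hc0 : c = 0
    · have hb0 : b = 0 := by
        by_contra hb0
        have hbpos : 0 < b := lt_of_le_of_ne hb (Ne.symm hb0)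
        have hapos : 0 < a := lt_of_le_of_ne ha (Ne.symm ha0)
        set t := b / (a + 1) with ht
        have htpos : 0 < t := by positivity
        have h1 := h t htpos
        rw [hc0] at h1
        rw [ht] at h1
        have : b / (a + 1) * a + (b / (a + 1))⁻¹ * 0 = b * a / (a + 1) := by
          ring
        rw [this] at h1
        have h2 : b * (2 * (a + 1)) ≤ b * a := by
          have h2a := mul_le_mul_of_nonneg_right h1 (by positivity : (0:ℝ) ≤ 2 * (a + 1))
          calc b * (2 * (a + 1)) ≤ (b * a / (a + 1)) / 2 * (2 * (a + 1)) := h2a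
            _ = b * a := by field_simp
        nlinarith
      rw [hb0, hc0]
      nlinarith
    · have hapos : 0 < a := lt_of_le_of_ne ha (Ne.symm ha0)
      have hcpos : 0 < c := lt_of_le_of_ne hc (Ne.symm hc0)
      have h1 := h (Real.sqrt c / Real.sqrt a) (by positivity)
      have hsa : Real.sqrt a > 0 := Real.sqrt_pos.mpr hapos
      have hsc : Real.sqrt c > 0 := Real.sqrt_pos.mpr hcpos
      have h2 : Real.sqrt c / Real.sqrt a * a + (Real.sqrt c / Real.sqrt a)⁻¹ * c
          = 2 * (Real.sqrt a * Real.sqrt c) := by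
        rw [inv_div]
        have hsaa : Real.sqrt a * Real.sqrt a = a := Real.mul_self_sqrt hapos.le
        have hscc : Real.sqrt c * Real.sqrt c = c := Real.mul_self_sqrt hcpos.le
        field_simp
        nlinarith [hsaa, hscc]
      rw [h2] at h1
      have h3 : b ≤ Real.sqrt a * Real.sqrt c := by linarith
      have h4 : b ^ 2 ≤ (Real.sqrt a * Real.sqrt c) ^ 2 := by
        exact pow_le_pow_left₀ hb h3 2
      calc b ^ 2 ≤ (Real.sqrt a * Real.sqrt c) ^ 2 := h4
        _ = a * c := by
            rw [mul_pow, Real.sq_sqrt hapos.le, Real.sq_sqrt hcpos.le]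

lemma two_by_two_psd {a b c : ℝ} (ha : 0 ≤ a) (hb : 0 ≤ b) (hc : 0 ≤ c) (h : b ^ 2 ≤ a * c) :
    (Matrix.of ![![a, b], ![b, c]]).PosSemidef := by
  refine .of_dotProduct_mulVec_nonneg ?_ ?_
  · ext i j
    fin_cases i <;> fin_cases j <;> simp [Matrix.conjTranspose_apply]
  · intro x
    have hx : star x = x := by funext i; simp
    rw [hx]
    have hexp : x ⬝ᵥ ((Matrix.of ![![a, b], ![b, c]]) *ᵥ x)
        = a * x 0 ^ 2 + 2 * b * x 0 * x 1 + c * x 1 ^ 2 := by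
      simp [dotProduct, Matrix.mulVec, Fin.sum_univ_two]
      ring
    rw [hexp]
    rcases eq_or_lt_of_le ha with ha0 | hapos
    · have hb0 : b = 0 := by nlinarith
      rw [hb0, ← ha0]
      nlinarith [sq_nonneg (x 1)]
    · nlinarith [sq_nonneg (a * x 0 + b * x 1), mul_nonneg (sub_nonneg.2 h) (sq_nonneg (x 1))]

lemma N_conj
    (N : Matrix (Fin n) (Fin n) ℂ → ℝ)
    (hinv : ∀ U V B, U ∈ Matrix.unitaryGroup (Fin n) ℂ →
      V ∈ Matrix.unitaryGroup (Fin n) ℂ → N (U * B * V) = N B)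
    (B : Matrix (Fin n) (Fin n) ℂ) : N Bᴴ = N B := by
  obtain ⟨U, P, hU, hP, rfl⟩ := polar_exists B
  have hUs : Uᴴ ∈ Matrix.unitaryGroup (Fin n) ℂ := by
    rw [← Matrix.star_eq_conjTranspose]; exact Unitary.star_mem hU
  rw [Matrix.conjTranspose_mul, hP.1.eq, N_right N hinv hUs P, N_left N hinv hU P]

lemma am_bound
    (N : Matrix (Fin n) (Fin n) ℂ → ℝ)
    (hpos : ∀ B, 0 ≤ N B) (hzero : ∀ B, N B = 0 → B = 0)
    (htri : ∀ B C, N (B + C) ≤ N B + N C)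
    (hsmul : ∀ (c : ℂ) B, N (c • B) = ‖c‖ * N B)
    (hinv : ∀ U V B, U ∈ Matrix.unitaryGroup (Fin n) ℂ →
      V ∈ Matrix.unitaryGroup (Fin n) ℂ → N (U * B * V) = N B)
    {A B C : Matrix (Fin n) (Fin n) ℂ}
    (hM : (Matrix.fromBlocks A B Bᴴ C).PosSemidef) :
    N B ≤ (N A + N C) / 2 := by
  have hconj : ∀ T : Matrix (Fin n) (Fin n) ℂ, N Tᴴ = N T := N_conj N hinv
  obtain ⟨U, P, hU, hP, rfl⟩ := polar_exists B
  have hUs : Uᴴ ∈ Matrix.unitaryGroup (Fin n) ℂ := by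
    rw [← Matrix.star_eq_conjTranspose]; exact Unitary.star_mem hU
  have hUU : Uᴴ * U = 1 := by
    rw [← Matrix.star_eq_conjTranspose]; exact Matrix.mem_unitaryGroup_iff'.mp hU
  have h1 := conj_blocks (X₁ := U) (X₂ := 1) hM
  have hB1 : Uᴴ * (U * P) * 1 = P := by
    rw [Matrix.mul_one, ← Matrix.mul_assoc, hUU, Matrix.one_mul]
  have hC1 : (1 : Matrix (Fin n) (Fin n) ℂ)ᴴ * C * 1 = C := by simp
  rw [hB1, hC1] at h1
  set A' := Uᴴ * A * U with hA'
  have hD := sub_blocks_psd hP.1 h1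
  have hRP : ((((2⁻¹ : ℝ) : ℂ)) • (A' + C) - P).PosSemidef := by
    have he : (((2⁻¹ : ℝ) : ℂ)) • (A' + C) - P
        = (((2⁻¹ : ℝ) : ℂ)) • (A' + C - (P + P)) := by
      push_cast
      module
    rw [he]
    exact psd_smul_real (by norm_num) hD
  have hmono := mono N hpos hzero htri hsmul hinv hconj hP hRP
  have hNA' : N A' = N A := hinv Uᴴ U A hUs hU
  have hNR : N ((((2⁻¹ : ℝ) : ℂ)) • (A' + C)) ≤ (N A + N C) / 2 := by
    rw [hsmul]
    have habs : ‖(((2⁻¹ : ℝ) : ℂ))‖ = 2⁻¹ := by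
      rw [Complex.norm_real]; norm_num
    rw [habs]
    have h5 : N (A' + C) ≤ N A + N C := by
      have := htri A' C
      rwa [hNA'] at this
    linarith
  have hNB : N (U * P) = N P := N_left N hinv hU P
  rw [hNB]
  linarith

lemma scaled_bound
    (N : Matrix (Fin n) (Fin n) ℂ → ℝ)
    (hpos : ∀ B, 0 ≤ N B) (hzero : ∀ B, N B = 0 → B = 0)
    (htri : ∀ B C, N (B + C) ≤ N B + N C)
    (hsmul : ∀ (c : ℂ) B, N (c • B) = ‖c‖ * N B)
    (hinv : ∀ U V B, U ∈ Matrix.unitaryGroup (Fin n) ℂ →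
      V ∈ Matrix.unitaryGroup (Fin n) ℂ → N (U * B * V) = N B)
    {A B C : Matrix (Fin n) (Fin n) ℂ}
    (hM : (Matrix.fromBlocks A B Bᴴ C).PosSemidef) {t : ℝ} (ht : 0 < t) :
    N B ≤ (t * N A + t⁻¹ * N C) / 2 := by
  set s := Real.sqrt t with hsdef
  have hs : 0 < s := Real.sqrt_pos.mpr ht
  have h1 := conj_blocks (X₁ := ((s : ℂ)) • 1) (X₂ := (((s⁻¹ : ℝ) : ℂ)) • 1) hM
  have hct : ∀ r : ℝ, (((r : ℂ)) • (1 : Matrix (Fin n) (Fin n) ℂ))ᴴ = ((r : ℂ)) • 1 := by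
    intro r
    rw [Matrix.conjTranspose_smul, Matrix.conjTranspose_one, Complex.star_def,
      Complex.conj_ofReal]
  have hprod : ∀ (a b : ℂ) (M : Matrix (Fin n) (Fin n) ℂ),
      (a • (1 : Matrix (Fin n) (Fin n) ℂ)) * M * (b • 1) = (a * b) • M := by
    intro a b M
    rw [smul_mul_assoc, Matrix.one_mul, mul_smul_comm, Matrix.mul_one, smul_smul, mul_comm b a]
  simp only [hct, hprod] at h1
  have e1 : ((s : ℂ)) * (s : ℂ) = ((t : ℝ) : ℂ) := by
    rw [← Complex.ofReal_mul, hsdef, Real.mul_self_sqrt ht.le]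
  have e2 : ((s : ℂ)) * ((s⁻¹ : ℝ) : ℂ) = 1 := by
    rw [← Complex.ofReal_mul, mul_inv_cancel₀ hs.ne', Complex.ofReal_one]
  have e3 : ((s⁻¹ : ℝ) : ℂ) * ((s⁻¹ : ℝ) : ℂ) = ((t⁻¹ : ℝ) : ℂ) := by
    rw [← Complex.ofReal_mul, ← mul_inv, hsdef, Real.mul_self_sqrt ht.le]
  rw [e1, e2, e3, one_smul] at h1
  have h2 := am_bound N hpos hzero htri hsmul hinv h1
  rw [hsmul, hsmul, Complex.norm_real, Complex.norm_real, Real.norm_eq_abs, Real.norm_eq_abs, abs_of_pos ht,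
    abs_of_pos (inv_pos.mpr ht)] at h2
  exact h2

end

/-- The `(i,j)` block of a `2 × 2` partitioned matrix with `n × n` blocks. -/
def blk {n : ℕ} (A : Matrix (Fin 2 × Fin n) (Fin 2 × Fin n) ℂ) (i j : Fin 2) :
    Matrix (Fin n) (Fin n) ℂ :=
  Matrix.of fun r s => A (i, r) (j, s)

/-- Horn–Mathias: for a `2 × 2` partitioned positive semi-definite matrix and any
unitarily invariant norm, the `2 × 2` matrix of block norms is positive
semi-definite; equivalently `‖A₁₂‖² ≤ ‖A₁₁‖ ‖A₂₂‖`. -/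
theorem norm_blocks_posSemidef_two {n : ℕ}
    (N : Matrix (Fin n) (Fin n) ℂ → ℝ)
    (hpos : ∀ B, 0 ≤ N B) (hzero : ∀ B, N B = 0 → B = 0)
    (htri : ∀ B C, N (B + C) ≤ N B + N C)
    (hsmul : ∀ (c : ℂ) B, N (c • B) = ‖c‖ * N B)
    (hinv : ∀ U V B, U ∈ Matrix.unitaryGroup (Fin n) ℂ →
      V ∈ Matrix.unitaryGroup (Fin n) ℂ → N (U * B * V) = N B)
    (A : Matrix (Fin 2 × Fin n) (Fin 2 × Fin n) ℂ) (hA : A.PosSemidef) :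
    (Matrix.of ![![N (blk A 0 0), N (blk A 0 1)],
        ![N (blk A 1 0), N (blk A 1 1)]]).PosSemidef ∧
    N (blk A 0 1) ^ 2 ≤ N (blk A 0 0) * N (blk A 1 1) := by
  classical
  set f : Fin n ⊕ Fin n → Fin 2 × Fin n :=
    Sum.elim (fun r => ((0 : Fin 2), r)) (fun r => ((1 : Fin 2), r)) with hf
  have hM : (A.submatrix f f).PosSemidef := hA.submatrix f
  have hMeq : A.submatrix f f
      = Matrix.fromBlocks (blk A 0 0) (blk A 0 1) (blk A 1 0) (blk A 1 1) := by
    ext i j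
    cases i <;> cases j <;> rfl
  have h10 : blk A 1 0 = (blk A 0 1)ᴴ := by
    ext r s
    rw [Matrix.conjTranspose_apply]
    show A (1, r) (0, s) = star (A (0, s) (1, r))
    conv_lhs => rw [← hA.1.eq]
    rfl
  have hM2 : (Matrix.fromBlocks (blk A 0 0) (blk A 0 1) (blk A 0 1)ᴴ (blk A 1 1)).PosSemidef := by
    rw [← h10, ← hMeq]
    exact hM
  have hcs : N (blk A 0 1) ^ 2 ≤ N (blk A 0 0) * N (blk A 1 1) := by
    apply cs_of_am (hpos _) (hpos _) (hpos _)
    intro t ht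
    exact scaled_bound N hpos hzero htri hsmul hinv hM2 ht
  have h10n : N (blk A 1 0) = N (blk A 0 1) := by
    rw [h10]
    exact N_conj N hinv (blk A 0 1)
  refine ⟨?_, hcs⟩
  rw [h10n]
  exact two_by_two_psd (hpos _) (hpos _) (hpos _) hcs
end

section
/- Let m ≥ 4 and n ≥ 1, and let ||·|| be any unitarily invariant norm on M_n(C). Then there exists a positive semi-definite matrix A = (A_ij)_{1≤i,j≤m} partitioned into n×n blocks such that the m×m matrix (||A_ij||) is not positive semi-definite. -/
open Matrix ComplexOrder

/-- Row `k` of the Gram-factor matrix (Thompson's example, padded with identity). -/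
def wfun : ℕ → ℕ → ℝ := fun k i =>
  if k = 0 then (if i = 0 then 1 else if i = 1 then 1 else if i = 3 then -1 else 0)
  else if k = 1 then (if i = 1 then 1 else if i = 2 then 1 else if i = 3 then 1 else 0)
  else if k = i ∧ 4 ≤ i then 1 else 0

/-- The Gram matrix entries. -/
def bsum (m i j : ℕ) : ℝ := ∑ k ∈ Finset.range m, wfun k i * wfun k j

/-- Test vector. -/
def vv : ℕ → ℝ := fun i =>
  if i = 0 then 1 else if i = 1 then -1 else if i = 2 then 1 else if i = 3 then -1 else 0

lemma wfun_eq_zero {k i : ℕ} (hk : 2 ≤ k) (hi : i < 4) : wfun k i = 0 := by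
  unfold wfun
  have h0 : k ≠ 0 := by omega
  have h1 : k ≠ 1 := by omega
  have h2 : ¬ (k = i ∧ 4 ≤ i) := by omega
  simp [h0, h1, h2]

lemma vv_eq_zero {i : ℕ} (hi : 4 ≤ i) : vv i = 0 := by
  unfold vv
  have h0 : i ≠ 0 := by omega
  have h1 : i ≠ 1 := by omega
  have h2 : i ≠ 2 := by omega
  have h3 : i ≠ 3 := by omega
  simp [h0, h1, h2, h3]

lemma bsum_small {m : ℕ} (hm : 4 ≤ m) (i j : ℕ) (hi : i < 4) (hj : j < 4) :
    bsum m i j = wfun 0 i * wfun 0 j + wfun 1 i * wfun 1 j := by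
  unfold bsum
  rw [← Finset.sum_subset (Finset.range_subset_range.mpr (by omega : 2 ≤ m))
    (fun k _ hk => by
      rw [wfun_eq_zero (by simpa [Finset.mem_range, Nat.lt_iff_add_one_le] using hk) hi,
        zero_mul])]
  simp [Finset.sum_range_succ]

/-- For `m ≥ 4`, `n ≥ 1` and any unitarily invariant norm on `M_n(ℂ)`, there is a
positive semi-definite matrix partitioned into `m²` blocks of size `n × n` whose
`m × m` matrix of block norms is not positive semi-definite. -/
theorem exists_norm_blocks_not_posSemidef_of_four_le {m n : ℕ}
    (hm : 4 ≤ m) (hn : 1 ≤ n)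
    (N : Matrix (Fin n) (Fin n) ℂ → ℝ)
    (hpos : ∀ B, 0 ≤ N B) (hzero : ∀ B, N B = 0 → B = 0)
    (htri : ∀ B C, N (B + C) ≤ N B + N C)
    (hsmul : ∀ (c : ℂ) B, N (c • B) = ‖c‖ * N B)
    (hinv : ∀ U V B, U ∈ Matrix.unitaryGroup (Fin n) ℂ →
      V ∈ Matrix.unitaryGroup (Fin n) ℂ → N (U * B * V) = N B) :
    ∃ A : Matrix (Fin m × Fin n) (Fin m × Fin n) ℂ, A.PosSemidef ∧
      ¬ (Matrix.of fun i j : Fin m =>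
          N (Matrix.of fun r s : Fin n => A (i, r) (j, s))).PosSemidef := by
  classical
  -- the rank-one "direction" matrix E = e₀ e₀ᵀ
  set E : Matrix (Fin n) (Fin n) ℂ :=
    Matrix.of (fun r s : Fin n => if r.val = 0 ∧ s.val = 0 then (1 : ℂ) else 0) with hE
  -- the Gram factor
  set C : Matrix (Fin m) (Fin m × Fin n) ℂ :=
    Matrix.of (fun k p => ((wfun k.val p.1.val : ℝ) : ℂ) *
      (if p.2.val = 0 then 1 else 0)) with hC
  refine ⟨Cᴴ * C, Matrix.posSemidef_conjTranspose_mul_self C, ?_⟩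
  intro hPSD
  -- every block is a real multiple of E
  have hblock : ∀ i j : Fin m,
      (Matrix.of fun r s : Fin n => (Cᴴ * C) (i, r) (j, s))
        = ((bsum m i.val j.val : ℝ) : ℂ) • E := by
    intro i j
    ext r s
    simp only [Matrix.of_apply, Matrix.mul_apply, Matrix.conjTranspose_apply, hC, hE,
      Matrix.smul_apply, smul_eq_mul]
    by_cases hr : r.val = 0 <;> by_cases hs : s.val = 0 <;>
      simp [hr, hs, Complex.conj_ofReal, bsum]
    push_cast
    rw [Fin.sum_univ_eq_sum_range (fun k => ((wfun k i.val : ℝ) : ℂ) * (wfun k j.val : ℝ)) m]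
  -- N E is positive
  have hE0 : E ≠ 0 := by
    intro h
    have h1 : E ⟨0, hn⟩ ⟨0, hn⟩ = 0 := by rw [h]; rfl
    simp [hE] at h1
  have hc : 0 < N E := lt_of_le_of_ne (hpos E) (fun h => hE0 (hzero E h.symm))
  -- the matrix of norms
  have hNorm : ∀ i j : Fin m,
      N (Matrix.of fun r s : Fin n => (Cᴴ * C) (i, r) (j, s))
        = |bsum m i.val j.val| * N E := by
    intro i j
    rw [hblock i j, hsmul, Complex.norm_real, Real.norm_eq_abs]
  -- the test vector
  set v : Fin m → ℝ := fun i => vv i.val with hv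
  have hq := hPSD.dotProduct_mulVec_nonneg v
  -- reduce sums to range 4
  have step : ∀ a : ℕ,
      (∑ j : Fin m, |bsum m a j.val| * N E * vv j.val)
        = ∑ k ∈ Finset.range 4, |bsum m a k| * N E * vv k := by
    intro a
    rw [Fin.sum_univ_eq_sum_range (fun k => |bsum m a k| * N E * vv k) m]
    exact (Finset.sum_subset (Finset.range_subset_range.mpr hm)
      (fun k _ (hk : k ∉ Finset.range 4) => by
        rw [vv_eq_zero (i := k) (by simpa [Finset.mem_range] using hk),
          mul_zero])).symm
  have hqval : (star v) ⬝ᵥ ((Matrix.of fun i j : Fin m =>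
      N (Matrix.of fun r s : Fin n => (Cᴴ * C) (i, r) (j, s))) *ᵥ v)
        = -2 * N E := by
    simp only [dotProduct, Matrix.mulVec, Matrix.of_apply, Pi.star_apply,
      star_trivial, hNorm, hv]
    calc (∑ i : Fin m, vv i.val *
            ∑ j : Fin m, |bsum m i.val j.val| * N E * vv j.val)
        = ∑ i : Fin m, vv i.val *
            ∑ k ∈ Finset.range 4, |bsum m i.val k| * N E * vv k := by
          refine Finset.sum_congr rfl fun i _ => ?_
          rw [step i.val]
      _ = ∑ a ∈ Finset.range 4, vv a *
            ∑ k ∈ Finset.range 4, |bsum m a k| * N E * vv k := by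
          rw [Fin.sum_univ_eq_sum_range
            (fun a => vv a * ∑ k ∈ Finset.range 4, |bsum m a k| * N E * vv k) m]
          exact (Finset.sum_subset (Finset.range_subset_range.mpr hm)
            (fun a _ (ha : a ∉ Finset.range 4) => by
              rw [vv_eq_zero (i := a) (by simpa [Finset.mem_range] using ha),
                zero_mul])).symm
      _ = -2 * N E := by
          have hb : ∀ i j : ℕ, i < 4 → j < 4 →
              bsum m i j = wfun 0 i * wfun 0 j + wfun 1 i * wfun 1 j :=
            fun i j hi hj => bsum_small hm i j hi hj
          simp only [Finset.sum_range_succ, Finset.sum_range_zero,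
            hb 0 0 (by norm_num) (by norm_num), hb 0 1 (by norm_num) (by norm_num),
            hb 0 2 (by norm_num) (by norm_num), hb 0 3 (by norm_num) (by norm_num),
            hb 1 0 (by norm_num) (by norm_num), hb 1 1 (by norm_num) (by norm_num),
            hb 1 2 (by norm_num) (by norm_num), hb 1 3 (by norm_num) (by norm_num),
            hb 2 0 (by norm_num) (by norm_num), hb 2 1 (by norm_num) (by norm_num),
            hb 2 2 (by norm_num) (by norm_num), hb 2 3 (by norm_num) (by norm_num),
            hb 3 0 (by norm_num) (by norm_num), hb 3 1 (by norm_num) (by norm_num),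
            hb 3 2 (by norm_num) (by norm_num), hb 3 3 (by norm_num) (by norm_num)]
          norm_num [wfun, vv]
          ring
  rw [hqval] at hq
  nlinarith
end
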